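/- Let 𝕊 be a family of (k+1)-subsets of {1,…,n} and t ≤ n-k-1. Then the fraction of t-subsets I ⊆ {1,…,n} whose complement contains some element of 𝕊, among all t-subsets, is at least |𝕊|/C(n,k+1). -/

import Mathlib

theorem fraction_complement_contains_bound (n k t : ℕ) (hkn : k + 1 ≤ n)
    (ht : t ≤ n - k - 1)
    (𝕊 : Finset (Finset (Fin n))) (h𝕊 : ∀ S ∈ 𝕊, S.card = k + 1) :
    (((Finset.univ : Finset (Finset (Fin n))).filter
        (fun I => I.card = t ∧ ∃ S ∈ 𝕊, S ⊆ Iᶜ)).card : ℝ) / (Nat.choose n t : ℝ) ≥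
      (𝕊.card : ℝ) / (Nat.choose n (k + 1) : ℝ) := by
  classical
  set A := (Finset.univ : Finset (Finset (Fin n))).filter
      (fun I => I.card = t ∧ ∃ S ∈ 𝕊, S ⊆ Iᶜ) with hA
  have htkn : t + (k + 1) ≤ n := by omega
  -- double counting
  have hswap : ∑ S ∈ 𝕊, (A.filter (fun I => S ⊆ Iᶜ)).card
      = ∑ I ∈ A, (𝕊.filter (fun S => S ⊆ Iᶜ)).card := by
    simp only [Finset.card_filter]
    rw [Finset.sum_comm]
  -- each S contributes exactly choose (n-k-1) t
  have hfiber : ∀ S ∈ 𝕊, (A.filter (fun I => S ⊆ Iᶜ)).card = (n - k - 1).choose t := by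
    intro S hS
    have hScard := h𝕊 S hS
    have : A.filter (fun I => S ⊆ Iᶜ) = Sᶜ.powersetCard t := by
      ext I
      simp only [hA, Finset.mem_filter, Finset.mem_univ, true_and,
        Finset.mem_powersetCard]
      constructor
      · rintro ⟨⟨hIt, -⟩, hSI⟩
        exact ⟨Finset.subset_compl_comm.mp hSI, hIt⟩
      · rintro ⟨hIS, hIt⟩
        exact ⟨⟨hIt, S, hS, Finset.subset_compl_comm.mp hIS⟩,
          Finset.subset_compl_comm.mp hIS⟩
    rw [this, Finset.card_powersetCard, Finset.card_compl, Fintype.card_fin, hScard, Nat.sub_sub]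
  -- each I contributes at most choose (n-t) (k+1)
  have hupper : ∀ I ∈ A, (𝕊.filter (fun S => S ⊆ Iᶜ)).card ≤ (n - t).choose (k + 1) := by
    intro I hI
    have hIt : I.card = t := (Finset.mem_filter.mp hI).2.1
    have hsub : 𝕊.filter (fun S => S ⊆ Iᶜ) ⊆ Iᶜ.powersetCard (k + 1) := by
      intro S hS
      rw [Finset.mem_filter] at hS
      rw [Finset.mem_powersetCard]
      exact ⟨hS.2, h𝕊 S hS.1⟩
    calc (𝕊.filter (fun S => S ⊆ Iᶜ)).card ≤ (Iᶜ.powersetCard (k + 1)).card :=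
          Finset.card_le_card hsub
      _ = (n - t).choose (k + 1) := by
          rw [Finset.card_powersetCard, Finset.card_compl, Fintype.card_fin, hIt]
  -- the key nat inequality
  have hnat : 𝕊.card * (n - k - 1).choose t ≤ A.card * (n - t).choose (k + 1) := by
    calc 𝕊.card * (n - k - 1).choose t
        = ∑ S ∈ 𝕊, (A.filter (fun I => S ⊆ Iᶜ)).card := by
          rw [Finset.sum_congr rfl hfiber, Finset.sum_const, smul_eq_mul]
      _ = ∑ I ∈ A, (𝕊.filter (fun S => S ⊆ Iᶜ)).card := hswap
      _ ≤ ∑ I ∈ A, (n - t).choose (k + 1) := Finset.sum_le_sum hupper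
      _ = A.card * (n - t).choose (k + 1) := by
          rw [Finset.sum_const, smul_eq_mul]
  -- binomial identity
  have hid : n.choose t * (n - t).choose (k + 1) = n.choose (k + 1) * (n - k - 1).choose t := by
    have h1 := Nat.choose_mul (n := n) (k := t + (k + 1)) (s := t) (by omega)
    have h2 := Nat.choose_mul (n := n) (k := t + (k + 1)) (s := k + 1) (by omega)
    have hsymm : (t + (k + 1)).choose t = (t + (k + 1)).choose (k + 1) := by
      have := Nat.choose_symm (n := t + (k + 1)) (k := k + 1) (by omega)
      rw [← this]
      congr 1
      omega
    have e1 : t + (k + 1) - t = k + 1 := by omega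
    have e2 : t + (k + 1) - (k + 1) = t := by omega
    have e3 : n - (k + 1) = n - k - 1 := by omega
    rw [e1] at h1
    rw [e2, e3] at h2
    rw [← h1, hsymm, h2]
  -- positivity
  have hpt : 0 < n.choose t := Nat.choose_pos (by omega)
  have hpk : 0 < n.choose (k + 1) := Nat.choose_pos hkn
  have hpnt : 0 < (n - t).choose (k + 1) := Nat.choose_pos (by omega)
  -- derive the clean nat inequality
  have hnat2 : 𝕊.card * n.choose t ≤ A.card * n.choose (k + 1) := by
    have := Nat.mul_le_mul_right (n.choose (k + 1)) hnat
    apply Nat.le_of_mul_le_mul_right _ hpnt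
    calc 𝕊.card * n.choose t * (n - t).choose (k + 1)
        = 𝕊.card * (n.choose t * (n - t).choose (k + 1)) := by ring
      _ = 𝕊.card * (n - k - 1).choose t * n.choose (k + 1) := by rw [hid]; ring
      _ ≤ A.card * (n - t).choose (k + 1) * n.choose (k + 1) := this
      _ = A.card * n.choose (k + 1) * (n - t).choose (k + 1) := by ring
  -- conclude over ℝ
  rw [ge_iff_le, div_le_div_iff₀ (by positivity) (by positivity)]
  have := (Nat.cast_le (α := ℝ)).mpr hnat2
  push_cast at this ⊢
  linarith
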